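/- Let 0 < γ ≤ 1 and let φ : [0,∞) → [0,∞) be rapidly decreasing (e.g. φ(r) = e^{-r²/8}). Fix v ≠ v' in ℝ³ and let E_{v v'} be the plane through v perpendicular to v' − v. Then the surface integral over w ∈ E_{v v'} of φ(|w|)·|2v − v' − w|^{γ−1}·|(2v − v' − w)·(v' − w)| / |v' − w| is bounded by C_φ (1 + |v − v'|^γ), where C_φ depends only on φ and γ. In particular, writing w = v + η₁e₁ + η₂e₂ in an orthonormal frame of E_{v v'}, the integrand is bounded by φ(η₁² + η₂²)(η₁² + η₂² + |v'−v|²)^{γ/2}, and ∫∫ φ(η₁²+η₂²)(η₁²+η₂²+|v'−v|²)^{γ/2} dη₁ dη₂ ≤ C_φ (1+|v'−v|^γ). -/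
import Mathlib

open MeasureTheory Module

lemma real_rpow_add_le_add_rpow {x y p : ℝ} (hx : 0 ≤ x) (hy : 0 ≤ y)
    (hp : 0 ≤ p) (hp1 : p ≤ 1) : (x + y) ^ p ≤ x ^ p + y ^ p := by
  have h := NNReal.coe_le_coe.2 (NNReal.rpow_add_le_add_rpow x.toNNReal y.toNNReal hp hp1)
  simpa [NNReal.coe_rpow, Real.coe_toNNReal x hx, Real.coe_toNNReal y hy,
    ← Real.toNNReal_add hx hy, max_eq_left (add_nonneg hx hy)] using h

/-- Lemma `estimwhb`: for a rapidly decreasing φ, the integral over the hyperplane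
E_{v v'} (parametrized by orthonormal coordinates η = (η₁,η₂), with r = |v − v'|) of
the collision kernel is bounded by C_φ (1 + r^γ).  Pointwise, the integrand is bounded
by φ(η₁²+η₂²)(η₁²+η₂²+r²)^{γ/2}, and the double integral of this bound is at most
C_φ (1 + r^γ). -/
theorem hyperplane_kernel_integral_bound
    (γ : ℝ) (hγ0 : 0 < γ) (hγ1 : γ ≤ 1)
    (φ : ℝ → ℝ) (hφ0 : ∀ r, 0 ≤ φ r) (hφc : Continuous φ)
    (hφdec : ∀ n : ℕ, ∃ C : ℝ, ∀ r : ℝ, 0 ≤ r → φ r * (1 + r) ^ n ≤ C) :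
    (∀ η₁ η₂ r : ℝ, 0 ≤ r →
      φ (η₁ ^ 2 + η₂ ^ 2) * (η₁ ^ 2 + η₂ ^ 2 + r ^ 2) ^ (γ / 2 - 1) *
          |η₁ ^ 2 + η₂ ^ 2 - r ^ 2| ≤
        φ (η₁ ^ 2 + η₂ ^ 2) * (η₁ ^ 2 + η₂ ^ 2 + r ^ 2) ^ (γ / 2)) ∧
    ∃ C > 0, ∀ r : ℝ, 0 ≤ r →
      (∫ η : ℝ × ℝ,
          φ (η.1 ^ 2 + η.2 ^ 2) * (η.1 ^ 2 + η.2 ^ 2 + r ^ 2) ^ (γ / 2)) ≤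
        C * (1 + r ^ γ) := by
  constructor
  · intro η₁ η₂ r hr
    set s := η₁ ^ 2 + η₂ ^ 2 with hs
    have hs0 : 0 ≤ s := by positivity
    rcases eq_or_lt_of_le (add_nonneg hs0 (sq_nonneg r)) with h0 | hpos
    · have h1 : s = 0 := by nlinarith [sq_nonneg r]
      have h2 : r ^ 2 = 0 := by nlinarith
      simp only [h1, h2, add_zero, sub_self, abs_zero, mul_zero]
      have : (0:ℝ) ^ (γ / 2) = 0 := Real.zero_rpow (by positivity)
      simp [this]
    · have habs : |s - r ^ 2| ≤ s + r ^ 2 := by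
        rw [abs_le]; constructor <;> nlinarith [sq_nonneg r]
      calc φ s * (s + r ^ 2) ^ (γ / 2 - 1) * |s - r ^ 2|
          ≤ φ s * (s + r ^ 2) ^ (γ / 2 - 1) * (s + r ^ 2) := by
            apply mul_le_mul_of_nonneg_left habs
            have := Real.rpow_nonneg hpos.le (γ / 2 - 1)
            exact mul_nonneg (hφ0 s) this
        _ = φ s * ((s + r ^ 2) ^ (γ / 2 - 1) * (s + r ^ 2)) := by ring
        _ = φ s * (s + r ^ 2) ^ (γ / 2) := by
            rw [← Real.rpow_add_one hpos.ne']
            norm_num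
  · obtain ⟨C₃, hC₃⟩ := hφdec 3
    -- integrability of the dominating function
    have hint4 : Integrable (fun η : ℝ × ℝ => (1 + ‖η‖) ^ (-(4:ℝ))) := by
      apply integrable_one_add_norm
      simp
      norm_num
    have hinth : Integrable
        (fun η : ℝ × ℝ => φ (η.1 ^ 2 + η.2 ^ 2) * (1 + (η.1 ^ 2 + η.2 ^ 2))) := by
      apply Integrable.mono' (hint4.const_mul (16 * C₃))
      · exact ((hφc.comp (by continuity)).mul (by continuity)).aestronglyMeasurable
      · filter_upwards with η
        set s := η.1 ^ 2 + η.2 ^ 2 with hsdef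
        have hs0 : 0 ≤ s := by positivity
        have hn : (0:ℝ) < 1 + ‖η‖ := by positivity
        rw [Real.norm_of_nonneg (mul_nonneg (hφ0 s) (by linarith))]
        have hrw : (1 + ‖η‖) ^ (-(4:ℝ)) = ((1 + ‖η‖) ^ (4:ℕ))⁻¹ := by
          rw [show (-(4:ℝ)) = -((4:ℕ):ℝ) by norm_num, Real.rpow_neg hn.le,
            Real.rpow_natCast]
        rw [hrw, ← div_eq_mul_inv, le_div_iff₀ (by positivity)]
        -- bound ‖η‖ by coordinates
        have ha : ‖η‖ ≤ |η.1| + |η.2| := by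
          rw [Prod.norm_def]
          simp only [Real.norm_eq_abs]
          exact max_le (le_add_of_nonneg_right (abs_nonneg _))
            (le_add_of_nonneg_left (abs_nonneg _))
        have hnsq : ‖η‖ ^ 2 ≤ 2 * s := by
          have h1 : ‖η‖ ^ 2 ≤ (|η.1| + |η.2|) ^ 2 := by
            apply pow_le_pow_left₀ (norm_nonneg η) ha
          nlinarith [sq_abs η.1, sq_abs η.2, sq_nonneg (|η.1| - |η.2|)]
        have h2 : (1 + ‖η‖) ^ 2 ≤ 4 * (1 + s) := by
          nlinarith [sq_nonneg (1 - ‖η‖), norm_nonneg η]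
        have key : (1 + ‖η‖) ^ 4 ≤ 16 * (1 + s) ^ 2 := by
          calc (1 + ‖η‖) ^ 4 = ((1 + ‖η‖) ^ 2) ^ 2 := by ring
            _ ≤ (4 * (1 + s)) ^ 2 := pow_le_pow_left₀ (by positivity) h2 2
            _ = 16 * (1 + s) ^ 2 := by ring
        have hphi := hC₃ s hs0
        have hφs := hφ0 s
        nlinarith [mul_le_mul_of_nonneg_left key (mul_nonneg hφs (by linarith : (0:ℝ) ≤ 1 + s))]
    set I := ∫ η : ℝ × ℝ, φ (η.1 ^ 2 + η.2 ^ 2) * (1 + (η.1 ^ 2 + η.2 ^ 2)) with hI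
    have hI0 : 0 ≤ I :=
      integral_nonneg fun η => mul_nonneg (hφ0 _) (by positivity)
    refine ⟨I + 1, by linarith, fun r hr => ?_⟩
    have hrγ : 0 ≤ r ^ γ := Real.rpow_nonneg hr γ
    have hmono : (∫ η : ℝ × ℝ, φ (η.1 ^ 2 + η.2 ^ 2) * (η.1 ^ 2 + η.2 ^ 2 + r ^ 2) ^ (γ / 2))
        ≤ ∫ η : ℝ × ℝ, (1 + r ^ γ) * (φ (η.1 ^ 2 + η.2 ^ 2) * (1 + (η.1 ^ 2 + η.2 ^ 2))) := by
      apply integral_mono_of_nonneg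
      · filter_upwards with η
        exact mul_nonneg (hφ0 _) (Real.rpow_nonneg (by positivity) _)
      · exact hinth.const_mul _
      · filter_upwards with η
        set s := η.1 ^ 2 + η.2 ^ 2 with hsdef
        have hs0 : 0 ≤ s := by positivity
        have hsub : (s + r ^ 2) ^ (γ / 2) ≤ s ^ (γ / 2) + r ^ γ := by
          have h := real_rpow_add_le_add_rpow hs0 (sq_nonneg r)
            (by positivity : (0:ℝ) ≤ γ / 2) (by linarith)
          have hrg : (r ^ 2) ^ (γ / 2) = r ^ γ := by
            rw [← Real.rpow_natCast r 2, ← Real.rpow_mul hr]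
            norm_num
            ring_nf
          rwa [hrg] at h
        have hsγ : s ^ (γ / 2) ≤ 1 + s := by
          rcases le_or_gt s 1 with h | h
          · have := Real.rpow_le_one hs0 h (by positivity : (0:ℝ) ≤ γ / 2)
            linarith
          · have h1 : s ^ (γ / 2) ≤ s ^ (1:ℝ) :=
              Real.rpow_le_rpow_of_exponent_le h.le (by linarith)
            rw [Real.rpow_one] at h1
            linarith
        have hfin : (s + r ^ 2) ^ (γ / 2) ≤ (1 + s) * (1 + r ^ γ) := by
          nlinarith [hsub, hsγ, hrγ]
        calc φ s * (s + r ^ 2) ^ (γ / 2) ≤ φ s * ((1 + s) * (1 + r ^ γ)) :=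
              mul_le_mul_of_nonneg_left hfin (hφ0 s)
          _ = (1 + r ^ γ) * (φ s * (1 + s)) := by ring
    rw [integral_const_mul] at hmono
    calc (∫ η : ℝ × ℝ, φ (η.1 ^ 2 + η.2 ^ 2) * (η.1 ^ 2 + η.2 ^ 2 + r ^ 2) ^ (γ / 2))
        ≤ (1 + r ^ γ) * I := hmono
      _ ≤ (1 + r ^ γ) * (I + 1) := by nlinarith
      _ = (I + 1) * (1 + r ^ γ) := by ring
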